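/- The sequence a_n(t) = tanh(t)^{n-1}/cosh(t), for n ≥ 1, satisfies the infinite system of ODEs ȧ_n(t) = (n-1)a_{n-1}(t) - n a_{n+1}(t) (with the convention a_0 = 0) for all t ≥ 0, with initial condition a_1(0)=1 and a_n(0)=0 for n ≥ 2. -/

import Mathlib

open Real

private lemma tanh_pow_div (m : ℕ) (t : ℝ) :
    Real.tanh t ^ m / Real.cosh t = Real.sinh t ^ m / Real.cosh t ^ (m + 1) := by
  rw [Real.tanh_eq_sinh_div_cosh, div_pow, pow_succ]
  field_simp

private lemma key (m : ℕ) (t : ℝ) :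
    HasDerivAt (fun s => Real.tanh s ^ m / Real.cosh s)
      ((m : ℝ) * (Real.tanh t ^ (m - 1) / Real.cosh t)
        - ((m : ℝ) + 1) * (Real.tanh t ^ (m + 1) / Real.cosh t)) t := by
  have hc : Real.cosh t ≠ 0 := (Real.cosh_pos t).ne'
  have hd : HasDerivAt (fun s => Real.sinh s ^ m / Real.cosh s ^ (m + 1))
      (((m : ℝ) * Real.sinh t ^ (m - 1) * Real.cosh t * Real.cosh t ^ (m + 1)
        - Real.sinh t ^ m * (((m : ℝ) + 1) * Real.cosh t ^ m * Real.sinh t))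
        / (Real.cosh t ^ (m + 1)) ^ 2) t := by
    have h1 := ((Real.hasDerivAt_sinh t).pow m)
    have h2 := ((Real.hasDerivAt_cosh t).pow (m + 1))
    have := h1.div h2 (pow_ne_zero _ hc)
    have e : (fun s => Real.sinh s ^ m / Real.cosh s ^ (m + 1)) = Real.sinh ^ m / Real.cosh ^ (m + 1) := by
      funext s; simp
    rw [e]
    simpa [Nat.cast_add] using this
  have heq : (fun s => Real.sinh s ^ m / Real.cosh s ^ (m + 1))
      = fun s => Real.tanh s ^ m / Real.cosh s := by
    funext s; rw [tanh_pow_div]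
  rw [heq] at hd
  convert hd using 1
  have hpyth : Real.cosh t ^ 2 - Real.sinh t ^ 2 = 1 := by
    have := Real.cosh_sq_sub_sinh_sq t; linarith
  rw [Real.tanh_eq_sinh_div_cosh]
  rcases Nat.eq_zero_or_pos m with hm | hm
  · subst hm
    simp
    ring
  · obtain ⟨k, rfl⟩ := Nat.exists_eq_add_of_le hm
    simp only [Nat.add_sub_cancel' hm, div_pow]
    have hck : Real.cosh t ^ (1 + k) ≠ 0 := pow_ne_zero _ hc
    field_simp
    ring_nf
    simp only [Nat.add_sub_cancel_left]
    ring

/-- The sequence `a_n(t) = tanh(t)^{n-1}/cosh(t)` (with `a_0 = 0`) solves the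
shell model `ȧ_n = (n-1)a_{n-1} - n a_{n+1}` for all `t ≥ 0`, with initial
condition `a_1(0) = 1` and `a_n(0) = 0` for `n ≥ 2`. -/
theorem stmt0 (a : ℕ → ℝ → ℝ)
    (h0 : ∀ t : ℝ, a 0 t = 0)
    (ha : ∀ n : ℕ, 1 ≤ n → ∀ t : ℝ, a n t = Real.tanh t ^ (n - 1) / Real.cosh t) :
    a 1 0 = 1 ∧ (∀ n : ℕ, 2 ≤ n → a n 0 = 0) ∧
    ∀ t : ℝ, 0 ≤ t → ∀ n : ℕ, 1 ≤ n →
      HasDerivAt (a n) (((n : ℝ) - 1) * a (n - 1) t - (n : ℝ) * a (n + 1) t) t := by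
  refine ⟨by simp [ha 1 le_rfl 0], fun n hn => by
    rw [ha n (by omega) 0]
    have : n - 1 ≠ 0 := by omega
    simp [Real.tanh_zero, zero_pow this], ?_⟩
  intro t _ n hn
  have hfun : a n = fun s => Real.tanh s ^ (n - 1) / Real.cosh s := by
    funext s; exact ha n hn s
  rw [hfun]
  obtain ⟨m, rfl⟩ : ∃ m, n = m + 1 := ⟨n - 1, by omega⟩
  simp only [Nat.add_sub_cancel]
  have h := key m t
  convert h using 1
  rcases Nat.eq_zero_or_pos m with hm | hm
  · subst hm
    rw [h0, ha 2 (by norm_num) t]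
    norm_num
  · rw [ha m (by omega) t, ha (m + 1 + 1) (by omega) t]
    push_cast
    ring
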